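/- Suppose the random walk on T is transient, every nonzero one-step transition probability of the walk is at least ε₀ for some ε₀ > 0, and the spectral radius of the walk is strictly smaller than 1. Then there exists a constant C_F < ∞ such that F′(−i|1) ≤ C_F for all i ∈ G, i.e., the derivatives at z = 1 of the first-descent generating functions F(−i|z) are uniformly bounded over all labels i. -/
import Mathlib


open Filter Topology MeasureTheory Set
open scoped ENNReal NNReal Classical

/-- Vertices of the directed cover of the directed graph `(V, E)` rooted at `i₀`:
finite directed paths in `G` starting at `i₀`. -/
def Cover (V : Type) (E : V → V → Prop) (i₀ : V) : Type :=
  {l : List V // List.Chain E i₀ l}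

namespace Cover

variable {V : Type} {E : V → V → Prop} {i₀ : V}

instance : MeasurableSpace (Cover V E i₀) := ⊤

/-- The root of the directed cover: the trivial path. -/
def root : Cover V E i₀ := ⟨[], List.Chain.nil⟩

/-- The label of a cover vertex: the endpoint of the corresponding path in `G`. -/
def lbl (x : Cover V E i₀) : V := x.val.getLastD i₀

/-- The height of a cover vertex: the graph distance in the tree from the root. -/
def ht (x : Cover V E i₀) : ℕ := x.val.length

/-- `y.IsChildOf x` holds iff `y` is a direct descendant (successor) of `x` in the tree. -/
def IsChildOf (y x : Cover V E i₀) : Prop := ∃ j : V, y.val = x.val ++ [j]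

end Cover

/-- One-step transition probabilities of the nearest-neighbour random walk on the
directed cover, with forward probabilities `pf` (on labels), backward probabilities `pm`
and a loop at the root. -/
noncomputable def coverP {V : Type} (E : V → V → Prop) (i₀ : V)
    (pf : V → V → ℝ) (pm : V → ℝ) (x y : Cover V E i₀) : ℝ :=
  if Cover.IsChildOf y x then pf x.lbl y.lbl
  else if x.val = [] ∧ y.val = [] then pm i₀
  else if Cover.IsChildOf x y then pm x.lbl
  else 0

/-- `n`-step transition probabilities of the Markov chain with one-step kernel `p`. -/
noncomputable def kpow {S : Type} (p : S → S → ℝ) : ℕ → S → S → ℝ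
  | 0 => fun x y => if x = y then 1 else 0
  | n + 1 => fun x y => ∑' z : S, p x z * kpow p n z y

/-- Taboo probabilities: `taboo p w n x y` is the probability that the Markov chain with
one-step kernel `p` started at `x` is at `y` at time `n`, avoiding `w` at all times `m < n`. -/
noncomputable def taboo {S : Type} (p : S → S → ℝ) (w : S) : ℕ → S → S → ℝ
  | 0 => fun x y => if x = y then 1 else 0
  | n + 1 => fun x y => if x = w then 0 else ∑' z : S, p x z * taboo p w n z y

/-- The probability that the Markov chain with kernel `p` started at `o` returns to `o`
(the sum over `n` of the probabilities of a first return at time `n + 1`). -/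
noncomputable def returnProbA {S : Type} (p : S → S → ℝ) (o : S) : ℝ≥0∞ :=
  ∑' n : ℕ, ENNReal.ofReal (∑' z : S, p o z * taboo p o n z o)

/-- The upper Collatz–Wielandt number `λ⁺(M)` of a nonnegative matrix `M`. -/
noncomputable def lambdaPlus {V : Type} (M : V → V → ℝ) : ℝ :=
  sSup {lam : ℝ | 0 < lam ∧ ∃ f : V → ℝ, (∀ i, 0 ≤ f i) ∧ f ≠ 0 ∧
    BddAbove (Set.range f) ∧ ∀ i, lam * f i ≤ ∑' j : V, M i j * f j}

/-- The `ℓ∞`-spectral radius `r∞(M) = lim_n ‖Mⁿ‖_∞^(1/n)` of a nonnegative matrix `M`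
(the limit exists; it is expressed via `limsup`). -/
noncomputable def rInfty {V : Type} (M : V → V → ℝ) : ℝ :=
  Filter.limsup (fun n : ℕ => (⨆ i : V, ∑' j : V, kpow M n i j) ^ ((n : ℝ)⁻¹)) Filter.atTop

/-- `(Ω, P, X)` is a realization of the nearest-neighbour random walk on the directed cover
started at the root: the finite-dimensional distributions are the Markovian ones given by the
kernel `coverP E i₀ pf pm` and starting point `Cover.root`. -/
def IsCoverWalk {V : Type} (E : V → V → Prop) (i₀ : V) (pf : V → V → ℝ) (pm : V → ℝ)
    {Ω : Type} [MeasurableSpace Ω] (P : Measure Ω) (X : ℕ → Ω → Cover V E i₀) : Prop :=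
  (∀ n, Measurable (X n)) ∧
  ∀ (n : ℕ) (path : ℕ → Cover V E i₀),
    P {ω | ∀ k ≤ n, X k ω = path k} =
      (if path 0 = Cover.root then 1 else 0) *
        ∏ k ∈ Finset.range n, ENNReal.ofReal (coverP E i₀ pf pm (path k) (path (k + 1)))

/-- The length of a path (given by its list of labels, with previous vertex `prev`)
with respect to the weight function `w` on the edges of `G`. -/
noncomputable def pathLen {V : Type} (w : V → V → ℝ) : V → List V → ℝ
  | _, [] => 0
  | prev, j :: rest => w prev j + pathLen w j rest

section Kernel
variable {S : Type} {p : S → S → ℝ}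

lemma summable_of_support_finite {f : S → ℝ} (h : {z | f z ≠ 0}.Finite) : Summable f := by
  apply summable_of_ne_finset_zero (s := h.toFinset)
  intro b hb
  by_contra hb'
  exact hb (h.mem_toFinset.2 hb')

variable (hp0 : ∀ x y, 0 ≤ p x y) (hfin : ∀ x, {z | p x z ≠ 0}.Finite)

include hp0 in
lemma kpow_nonneg : ∀ n x y, 0 ≤ kpow p n x y := by
  intro n
  induction n with
  | zero => intro x y; simp only [kpow]; split <;> norm_num
  | succ n ih =>
    intro x y
    exact tsum_nonneg fun z => mul_nonneg (hp0 x z) (ih z y)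

include hfin in
lemma summable_step (g : S → ℝ) (x : S) : Summable (fun z => p x z * g z) := by
  apply summable_of_support_finite
  apply (hfin x).subset
  intro z hz
  simp only [mem_setOf_eq] at hz ⊢
  intro h; apply hz; rw [h, zero_mul]

include hfin in
lemma kpow_finsupp : ∀ n x, {y | kpow p n x y ≠ 0}.Finite := by
  intro n
  induction n with
  | zero =>
    intro x
    apply (Set.finite_singleton x).subset
    intro y hy
    simp only [mem_setOf_eq, kpow] at hy
    simp only [mem_singleton_iff]
    by_contra h
    exact hy (if_neg (fun hxy => h hxy.symm))
  | succ n ih =>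
    intro x
    apply Set.Finite.subset ((hfin x).biUnion (fun z _ => ih z))
    intro y hy
    simp only [mem_setOf_eq, kpow] at hy
    by_contra h
    apply hy
    have hall : ∀ z, p x z * kpow p n z y = 0 := by
      intro z
      by_cases hz : p x z = 0
      · rw [hz, zero_mul]
      · have hk : kpow p n z y = 0 := by
          by_contra hk
          exact h (Set.mem_biUnion hz hk)
        rw [hk, mul_zero]
    rw [tsum_congr hall, tsum_zero]

variable (hrow : ∀ x, ∑' z, p x z ≤ 1)

include hp0 hfin hrow in
lemma kpow_rowsum : ∀ n x, ∑' y, kpow p n x y ≤ 1 := by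
  intro n
  induction n with
  | zero =>
    intro x
    have : ∑' y, kpow p 0 x y = 1 := by
      rw [tsum_eq_single x]
      · simp [kpow]
      · intro b hb; simp only [kpow]; exact if_neg (fun h => hb h.symm)
    rw [this]
  | succ n ih =>
    intro x
    set T := (kpow_finsupp hfin (n+1) x).toFinset with hT
    set S₀ := (hfin x).toFinset with hS₀
    have h1 : ∑' y, kpow p (n+1) x y = ∑ y ∈ T, kpow p (n+1) x y := by
      apply tsum_eq_sum
      intro b hb
      by_contra hb'
      exact hb ((kpow_finsupp hfin (n+1) x).mem_toFinset.2 hb')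
    have h2 : ∀ y, kpow p (n+1) x y = ∑ z ∈ S₀, p x z * kpow p n z y := by
      intro y
      show (∑' z, p x z * kpow p n z y) = _
      apply tsum_eq_sum
      intro b hb
      have : p x b = 0 := by
        by_contra hb'
        exact hb ((hfin x).mem_toFinset.2 hb')
      rw [this, zero_mul]
    rw [h1]
    calc ∑ y ∈ T, kpow p (n+1) x y
        = ∑ y ∈ T, ∑ z ∈ S₀, p x z * kpow p n z y := by
          exact Finset.sum_congr rfl (fun y _ => h2 y)
      _ = ∑ z ∈ S₀, ∑ y ∈ T, p x z * kpow p n z y := Finset.sum_comm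
      _ = ∑ z ∈ S₀, p x z * ∑ y ∈ T, kpow p n z y := by
          exact Finset.sum_congr rfl (fun z _ => (Finset.mul_sum _ _ _).symm)
      _ ≤ ∑ z ∈ S₀, p x z * 1 := by
          apply Finset.sum_le_sum
          intro z _
          apply mul_le_mul_of_nonneg_left _ (hp0 x z)
          calc ∑ y ∈ T, kpow p n z y ≤ ∑' y, kpow p n z y := by
                apply Summable.sum_le_tsum
                · intro b _; exact kpow_nonneg hp0 n z b
                · exact summable_of_support_finite (kpow_finsupp hfin n z)
            _ ≤ 1 := ih z
      _ = ∑ z ∈ S₀, p x z := by simp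
      _ ≤ ∑' z, p x z := by
          apply Summable.sum_le_tsum
          · intro b _; exact hp0 x b
          · exact summable_of_support_finite (hfin x)
      _ ≤ 1 := hrow x

include hp0 hfin hrow in
lemma kpow_le_one (n : ℕ) (x y : S) : kpow p n x y ≤ 1 := by
  calc kpow p n x y ≤ ∑' y', kpow p n x y' := by
        apply Summable.le_tsum (summable_of_support_finite (kpow_finsupp hfin n x)) y
        intro b _; exact kpow_nonneg hp0 n x b
    _ ≤ 1 := kpow_rowsum hp0 hfin hrow n x

lemma kpow_one (x y : S) : kpow p 1 x y = p x y := by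
  show (∑' z, p x z * kpow p 0 z y) = p x y
  rw [tsum_eq_single y]
  · simp [kpow]
  · intro b hb; simp only [kpow]; rw [if_neg hb, mul_zero]

include hp0 hfin in
lemma kpow_mul_le : ∀ m n (x z y : S), kpow p m x z * kpow p n z y ≤ kpow p (m + n) x y := by
  intro m
  induction m with
  | zero =>
    intro n x z y
    simp only [kpow, Nat.zero_add]
    split
    · next h => rw [one_mul, h]
    · rw [zero_mul]; exact kpow_nonneg hp0 n x y
  | succ m ih =>
    intro n x z y
    have key : kpow p (m + 1) x z * kpow p n z y
        = ∑' w, p x w * kpow p m w z * kpow p n z y := by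
      show (∑' w, p x w * kpow p m w z) * kpow p n z y = _
      rw [← tsum_mul_right]
    rw [key]
    have : m + 1 + n = (m + n) + 1 := by omega
    rw [this]
    show (∑' w, p x w * kpow p m w z * kpow p n z y) ≤ ∑' w, p x w * kpow p (m+n) w y
    apply Summable.tsum_le_tsum
    · intro w
      rw [mul_assoc]
      exact mul_le_mul_of_nonneg_left (ih n w z y) (hp0 x w)
    · apply summable_of_support_finite
      apply (hfin x).subset
      intro w hw
      simp only [mem_setOf_eq] at hw ⊢
      intro h; apply hw; rw [h, zero_mul, zero_mul]
    · exact summable_step hfin _ x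

include hp0 in
lemma taboo_nonneg (w : S) : ∀ n x y, 0 ≤ taboo p w n x y := by
  intro n
  induction n with
  | zero => intro x y; simp only [taboo]; split <;> norm_num
  | succ n ih =>
    intro x y
    simp only [taboo]
    split
    · exact le_refl 0
    · exact tsum_nonneg fun z => mul_nonneg (hp0 x z) (ih z y)

include hp0 hfin in
lemma taboo_le_kpow (w : S) : ∀ n x y, taboo p w n x y ≤ kpow p n x y := by
  intro n
  induction n with
  | zero => intro x y; simp [taboo, kpow]
  | succ n ih =>
    intro x y
    show (if x = w then 0 else ∑' z, p x z * taboo p w n z y) ≤ ∑' z, p x z * kpow p n z y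
    split
    · exact tsum_nonneg fun z => mul_nonneg (hp0 x z) (kpow_nonneg hp0 n z y)
    · apply Summable.tsum_le_tsum
      · intro z
        exact mul_le_mul_of_nonneg_left (ih z y) (hp0 x z)
      · apply summable_of_support_finite
        apply (hfin x).subset
        intro z hz
        simp only [mem_setOf_eq] at hz ⊢
        intro h; apply hz; rw [h, zero_mul]
      · exact summable_step hfin _ x

end Kernel
section Fekete
variable {S : Type} {p : S → S → ℝ}
variable (hp0 : ∀ x y, 0 ≤ p x y) (hfin : ∀ x, {z | p x z ≠ 0}.Finite)
  (hrow : ∀ x, ∑' z, p x z ≤ 1)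

include hp0 hfin in
lemma kpow_pow_le (x : S) (n : ℕ) : ∀ j, (kpow p n x x) ^ j ≤ kpow p (j * n) x x := by
  intro j
  induction j with
  | zero => simp [kpow]
  | succ j ih =>
    rw [pow_succ]
    calc (kpow p n x x)^j * kpow p n x x ≤ kpow p (j*n) x x * kpow p n x x :=
          mul_le_mul_of_nonneg_right ih (kpow_nonneg hp0 n x x)
      _ ≤ kpow p (j*n + n) x x := kpow_mul_le hp0 hfin _ _ _ _ _
      _ = kpow p ((j+1)*n) x x := by rw [Nat.succ_mul]

include hp0 hfin hrow in
lemma kpow_rpow_bounded (o : S) :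
    Filter.IsBoundedUnder (· ≤ ·) Filter.atTop (fun m : ℕ => kpow p m o o ^ ((m:ℝ)⁻¹)) := by
  refine Filter.isBoundedUnder_of ⟨1, fun m => ?_⟩
  exact Real.rpow_le_one (kpow_nonneg hp0 m o o) (kpow_le_one hp0 hfin hrow m o o)
    (by positivity)

include hp0 hfin hrow in
lemma rho_nonneg (o : S) :
    0 ≤ Filter.limsup (fun m : ℕ => kpow p m o o ^ ((m:ℝ)⁻¹)) Filter.atTop :=
  Filter.le_limsup_of_frequently_le
    (Filter.Frequently.of_forall fun m => Real.rpow_nonneg (kpow_nonneg hp0 m o o) _)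
    (kpow_rpow_bounded hp0 hfin hrow o)

include hp0 hfin hrow in
lemma kpow_self_le (o : S) (n : ℕ) (hn : 1 ≤ n) :
    kpow p n o o ≤ (Filter.limsup (fun m : ℕ => kpow p m o o ^ ((m:ℝ)⁻¹)) Filter.atTop) ^ n := by
  set ρ := Filter.limsup (fun m : ℕ => kpow p m o o ^ ((m:ℝ)⁻¹)) Filter.atTop with hρdef
  have hρ0 : 0 ≤ ρ := rho_nonneg hp0 hfin hrow o
  rcases (kpow_nonneg hp0 n o o).eq_or_lt with h | h
  · rw [← h]; exact pow_nonneg hρ0 n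
  · set c := kpow p n o o ^ ((n:ℝ)⁻¹) with hc
    have hn0 : (n:ℝ) ≠ 0 := Nat.cast_ne_zero.2 (by omega)
    have hcn : c ^ n = kpow p n o o := by
      rw [hc, ← Real.rpow_natCast (kpow p n o o ^ ((n:ℝ)⁻¹)) n, ← Real.rpow_mul h.le,
        inv_mul_cancel₀ hn0, Real.rpow_one]
    have hfreq : ∃ᶠ m in Filter.atTop, c ≤ kpow p m o o ^ ((m:ℝ)⁻¹) := by
      rw [Filter.frequently_atTop]
      intro N
      refine ⟨(N+1)*n, ?_, ?_⟩
      · calc N ≤ (N+1)*1 := by omega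
          _ ≤ (N+1)*n := Nat.mul_le_mul_left _ hn
      · have hj : (kpow p n o o)^(N+1) ≤ kpow p ((N+1)*n) o o := kpow_pow_le hp0 hfin o n (N+1)
        have heq : ((kpow p n o o)^(N+1)) ^ ((((N+1)*n : ℕ)):ℝ)⁻¹ = c := by
          rw [← Real.rpow_natCast (kpow p n o o) (N+1), ← Real.rpow_mul h.le, hc]
          congr 1
          push_cast
          have hN : ((N:ℝ)+1) ≠ 0 := by positivity
          field_simp
        calc c = ((kpow p n o o)^(N+1)) ^ ((((N+1)*n : ℕ)):ℝ)⁻¹ := heq.symm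
          _ ≤ kpow p ((N+1)*n) o o ^ ((((N+1)*n : ℕ)):ℝ)⁻¹ :=
              Real.rpow_le_rpow (pow_nonneg h.le _) hj (by positivity)
    have hcρ : c ≤ ρ := Filter.le_limsup_of_frequently_le hfreq (kpow_rpow_bounded hp0 hfin hrow o)
    calc kpow p n o o = c ^ n := hcn.symm
      _ ≤ ρ ^ n := pow_le_pow_left₀ (Real.rpow_nonneg h.le _) hcρ n

include hp0 hfin hrow in
lemma kpow_any_le (o x : S) (hk : ∃ k, 0 < kpow p k o x) (hl : ∃ l, 0 < kpow p l x o)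
    (n : ℕ) (hn : 1 ≤ n) :
    kpow p n x x ≤ (Filter.limsup (fun m : ℕ => kpow p m o o ^ ((m:ℝ)⁻¹)) Filter.atTop) ^ n := by
  obtain ⟨k, hk⟩ := hk
  obtain ⟨l, hl⟩ := hl
  set ρ := Filter.limsup (fun m : ℕ => kpow p m o o ^ ((m:ℝ)⁻¹)) Filter.atTop with hρdef
  have hρ0 : 0 ≤ ρ := rho_nonneg hp0 hfin hrow o
  set a := kpow p k o x with ha
  set b := kpow p l x o with hb
  have hab : 0 < a * b := mul_pos hk hl
  have key : ∀ j, 1 ≤ j → a * b * (kpow p n x x)^j ≤ ρ^(k+l) * (ρ^n)^j := by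
    intro j hj
    have h1 : (kpow p n x x)^j ≤ kpow p (j*n) x x := kpow_pow_le hp0 hfin x n j
    have h2 : a * kpow p (j*n) x x ≤ kpow p (k + j*n) o x := kpow_mul_le hp0 hfin k (j*n) o x x
    have h3 : kpow p (k + j*n) o x * b ≤ kpow p (k + j*n + l) o o :=
      kpow_mul_le hp0 hfin _ l o x o
    have h4 : kpow p (k + j*n + l) o o ≤ ρ^(k + j*n + l) :=
      kpow_self_le hp0 hfin hrow o _ (by nlinarith)
    calc a * b * (kpow p n x x)^j = (a * (kpow p n x x)^j) * b := by ring
      _ ≤ (a * kpow p (j*n) x x) * b :=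
          mul_le_mul_of_nonneg_right (mul_le_mul_of_nonneg_left h1 hk.le) hl.le
      _ ≤ kpow p (k + j*n) o x * b := mul_le_mul_of_nonneg_right h2 hl.le
      _ ≤ kpow p (k + j*n + l) o o := h3
      _ ≤ ρ^(k + j*n + l) := h4
      _ = ρ^(k+l) * (ρ^n)^j := by rw [← pow_mul, ← pow_add]; congr 1; ring
  by_contra hcon
  push_neg at hcon
  rcases hρ0.eq_or_lt with hρeq | hρpos
  · have h0 : ρ ^ n = 0 := by rw [← hρeq]; exact zero_pow (by omega)
    have hkey := key 1 le_rfl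
    rw [h0] at hcon
    simp only [pow_one, h0, mul_zero] at hkey
    nlinarith
  · have hq : 0 < ρ^n := pow_pos hρpos n
    set r := kpow p n x x / ρ^n with hr
    have hr1 : 1 < r := (one_lt_div hq).2 hcon
    set K := ρ^(k+l) / (a*b) with hK
    obtain ⟨j, hj⟩ := pow_unbounded_of_one_lt K hr1
    have hjJ : K < r^(j+1) := lt_of_lt_of_le hj (pow_le_pow_right₀ (le_of_lt hr1) (Nat.le_succ j))
    have hkey := key (j+1) (by omega)
    have hvJ : (kpow p n x x)^(j+1) = r^(j+1) * (ρ^n)^(j+1) := by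
      rw [hr, div_pow, div_mul_cancel₀]
      exact ne_of_gt (pow_pos hq (j+1))
    have hKeq : ρ^(k+l) = K * (a*b) := (div_mul_cancel₀ _ (ne_of_gt hab)).symm
    rw [hvJ, hKeq] at hkey
    have hqJ : 0 < (ρ^n)^(j+1) := pow_pos hq _
    nlinarith [mul_lt_mul_of_pos_right hjJ (mul_pos hab hqJ), hkey]

end Fekete
section CoverLemmas
variable {V : Type} {E : V → V → Prop} {i₀ : V}

lemma getLastD_cons' (l : List V) (a d : V) : (a :: l).getLastD d = l.getLastD a := by
  cases l <;> simp [List.getLastD]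

lemma chain_prefix : ∀ (l₁ : List V) {l₂ : List V} {a : V},
    List.Chain E a (l₁ ++ l₂) → List.Chain E a l₁ := by
  intro l₁
  induction l₁ with
  | nil => intro _ _ _; exact List.Chain.nil
  | cons b t ih =>
    intro l₂ a h
    rw [List.cons_append] at h
    rcases List.chain_cons.1 h with ⟨hab, h'⟩
    exact List.chain_cons.2 ⟨hab, ih h'⟩

lemma chain_last : ∀ (l : List V) {a j : V}, List.Chain E a (l ++ [j]) → E (l.getLastD a) j := by
  intro l
  induction l with
  | nil => intro a j h; exact (List.chain_cons.1 h).1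
  | cons b t ih =>
    intro a j h
    rw [List.cons_append] at h
    rcases List.chain_cons.1 h with ⟨_, h'⟩
    rw [getLastD_cons']
    exact ih h'

lemma Cover.IsChildOf.val_eq {x y : Cover V E i₀} (h : x.IsChildOf y) :
    x.val = y.val ++ [x.lbl] := by
  obtain ⟨j, hj⟩ := h
  have : x.lbl = j := by rw [Cover.lbl, hj, List.getLastD_concat]
  rw [this, hj]

lemma Cover.IsChildOf.edge {x y : Cover V E i₀} (h : x.IsChildOf y) : E y.lbl x.lbl := by
  have hc := x.property
  rw [h.val_eq] at hc
  exact chain_last _ hc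

lemma not_child_of_child {x y : Cover V E i₀} (h : x.IsChildOf y) : ¬ y.IsChildOf x := by
  rintro ⟨j, hj⟩
  obtain ⟨j', hj'⟩ := h
  rw [hj'] at hj
  have := congrArg List.length hj
  simp at this

lemma child_val_ne_nil {x y : Cover V E i₀} (h : x.IsChildOf y) : x.val ≠ [] := by
  obtain ⟨j, hj⟩ := h
  simp [hj]

variable {pG : V → V → ℝ} {pm : V → ℝ}

lemma coverP_nonneg (h1 : ∀ i, 0 ≤ pm i) (h2 : ∀ i, pm i ≤ 1) (h3 : ∀ i j, 0 ≤ pG i j)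
    (x y : Cover V E i₀) : 0 ≤ coverP E i₀ (fun i j => (1 - pm i) * pG i j) pm x y := by
  unfold coverP
  split_ifs
  · exact mul_nonneg (by linarith [h2 x.lbl]) (h3 _ _)
  · exact h1 i₀
  · exact h1 x.lbl
  · exact le_refl 0

lemma coverP_child {pf : V → V → ℝ} {x y : Cover V E i₀} (h : y.IsChildOf x) :
    coverP E i₀ pf pm x y = pf x.lbl y.lbl := if_pos h

lemma coverP_parent {pf : V → V → ℝ} {x y : Cover V E i₀} (h : x.IsChildOf y) :
    coverP E i₀ pf pm x y = pm x.lbl := by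
  unfold coverP
  rw [if_neg (not_child_of_child h), if_neg (fun hc => child_val_ne_nil h hc.1), if_pos h]

lemma coverP_finsupp (hout : ∀ i : V, {j | E i j}.Finite)
    (hpG0 : ∀ i j, 0 ≤ pG i j) (hpGpos : ∀ i j, 0 < pG i j ↔ E i j) (x : Cover V E i₀) :
    {z | coverP E i₀ (fun i j => (1 - pm i) * pG i j) pm x z ≠ 0}.Finite := by
  apply Set.Finite.of_finite_image (f := Subtype.val) _ (Subtype.val_injective.injOn)
  apply Set.Finite.subset ((((hout x.lbl).image (fun j => x.val ++ [j])).union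
    ((Set.finite_singleton (x.val.dropLast)).union (Set.finite_singleton ([] : List V)))))
  rintro _ ⟨z, hz, rfl⟩
  have hz : coverP E i₀ (fun i j => (1 - pm i) * pG i j) pm x z ≠ 0 := hz
  unfold coverP at hz
  split_ifs at hz with h1 h2 h3
  · left
    refine ⟨Cover.lbl z, ?_, ?_⟩
    · have hne : pG x.lbl (Cover.lbl z) ≠ 0 := fun h => hz (by
        show (1 - pm x.lbl) * pG x.lbl (Cover.lbl z) = 0
        rw [h, mul_zero])
      exact (hpGpos _ _).1 (lt_of_le_of_ne (hpG0 _ _) (Ne.symm hne))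
    · exact h1.val_eq.symm
  · right; right; exact h2.2
  · right; left
    rw [h3.val_eq, List.dropLast_concat]
    exact Set.mem_singleton _
  · exact absurd rfl hz

lemma tsum_le_of_subsingleton_support {S : Type} {f : S → ℝ} {B : ℝ}
    (h0 : ∀ z, 0 ≤ f z) (hB : ∀ z, f z ≤ B) (hB0 : 0 ≤ B)
    (hs : {z | f z ≠ 0}.Subsingleton) : ∑' z, f z ≤ B := by
  by_cases h : ∀ z, f z = 0
  · rw [tsum_congr h, tsum_zero]; exact hB0
  · push_neg at h
    obtain ⟨z₀, hz₀⟩ := h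
    rw [tsum_eq_single z₀ (fun b hb => by
      by_contra hb'
      exact hb (hs hb' hz₀))]
    exact hB z₀

lemma coverP_rowsum (hout : ∀ i : V, {j | E i j}.Finite)
    (hpG0 : ∀ i j, 0 ≤ pG i j) (hpGpos : ∀ i j, 0 < pG i j ↔ E i j)
    (hpGsum : ∀ i, ∑' j : V, pG i j = 1)
    (hpm0 : ∀ i, 0 ≤ pm i) (hpm1 : ∀ i, pm i ≤ 1) (x : Cover V E i₀) :
    ∑' z, coverP E i₀ (fun i j => (1 - pm i) * pG i j) pm x z ≤ 1 := by
  classical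
  set P := coverP E i₀ (fun i j => (1 - pm i) * pG i j) pm with hP
  set i := x.lbl with hi
  set c : Cover V E i₀ → ℝ := fun z => if z.IsChildOf x then P x z else 0 with hc
  set r : Cover V E i₀ → ℝ := fun z => if z.IsChildOf x then 0 else P x z with hrr
  have hP0 : ∀ z, 0 ≤ P x z := fun z => coverP_nonneg hpm0 hpm1 hpG0 x z
  have hPfin := coverP_finsupp hout hpG0 hpGpos (pm := pm) x
  have hsplit : ∀ z, P x z = c z + r z := by
    intro z
    by_cases h : z.IsChildOf x <;> simp [hc, hrr, h]
  have hcfin : {z | c z ≠ 0}.Finite := by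
    apply hPfin.subset
    intro z hz
    simp only [Set.mem_setOf_eq, hc] at hz ⊢
    intro h; apply hz
    split_ifs
    · exact h
    · rfl
  have hrfin : {z | r z ≠ 0}.Finite := by
    apply hPfin.subset
    intro z hz
    simp only [Set.mem_setOf_eq, hrr] at hz ⊢
    intro h; apply hz
    split_ifs
    · rfl
    · exact h
  have hctot : ∑' z, c z ≤ 1 - pm i := by
    rw [tsum_eq_sum (s := hcfin.toFinset)
      (fun b hb => by by_contra hb'; exact hb (hcfin.mem_toFinset.2 hb'))]
    have hval : ∀ z ∈ hcfin.toFinset, c z = (1 - pm i) * pG i z.lbl := by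
      intro z hz
      rw [Set.Finite.mem_toFinset] at hz
      simp only [Set.mem_setOf_eq, hc] at hz
      by_cases h : z.IsChildOf x
      · simp only [hc, if_pos h]
        rw [hP, coverP_child h]
      · simp [h] at hz
    have hchild : ∀ z ∈ hcfin.toFinset, z.IsChildOf x := by
      intro z hz
      rw [Set.Finite.mem_toFinset] at hz
      simp only [Set.mem_setOf_eq, hc] at hz
      by_cases h : z.IsChildOf x
      · exact h
      · simp [h] at hz
    have hinj : ∀ z₁ ∈ hcfin.toFinset, ∀ z₂ ∈ hcfin.toFinset,
        z₁.lbl = z₂.lbl → z₁ = z₂ := by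
      intro z₁ h₁ z₂ h₂ hl
      apply Subtype.ext
      rw [(hchild z₁ h₁).val_eq, (hchild z₂ h₂).val_eq, hl]
    calc ∑ z ∈ hcfin.toFinset, c z
        = ∑ z ∈ hcfin.toFinset, (1 - pm i) * pG i z.lbl := Finset.sum_congr rfl hval
      _ = ∑ j ∈ hcfin.toFinset.image Cover.lbl, (1 - pm i) * pG i j :=
          (Finset.sum_image (f := fun j => (1 - pm i) * pG i j) hinj).symm
      _ = (1 - pm i) * ∑ j ∈ hcfin.toFinset.image Cover.lbl, pG i j := by
          rw [Finset.mul_sum]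
      _ ≤ (1 - pm i) * 1 := by
          apply mul_le_mul_of_nonneg_left _ (by linarith [hpm1 i])
          have hs : Summable (pG i) := by
            by_contra hns
            have h1 := hpGsum i
            rw [tsum_eq_zero_of_not_summable hns] at h1
            exact one_ne_zero h1.symm
          calc ∑ j ∈ hcfin.toFinset.image Cover.lbl, pG i j ≤ ∑' j, pG i j :=
                Summable.sum_le_tsum _ (fun b _ => hpG0 i b) hs
            _ = 1 := hpGsum i
      _ = 1 - pm i := mul_one _
  have hrtot : ∑' z, r z ≤ pm i := by
    apply tsum_le_of_subsingleton_support
    · intro z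
      simp only [hrr]
      split_ifs
      · exact le_refl 0
      · exact hP0 z
    · intro z
      simp only [hrr]
      split_ifs with h
      · exact hpm0 i
      · rw [hP]
        unfold coverP
        rw [if_neg h]
        split_ifs with h2 h3
        · have : i = i₀ := by rw [hi, Cover.lbl, h2.1]; rfl
          rw [this]
        · exact le_refl _
        · exact hpm0 i
    · exact hpm0 i
    · intro z₁ h₁ z₂ h₂
      simp only [Set.mem_setOf_eq, hrr] at h₁ h₂
      have hval : ∀ z : Cover V E i₀, (if z.IsChildOf x then 0 else P x z) ≠ 0 →
          z.val = (if x.val = [] then ([] : List V) else x.val.dropLast) := by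
        intro z hz
        split_ifs at hz with h
        · exact absurd rfl hz
        · rw [hP] at hz
          unfold coverP at hz
          rw [if_neg h] at hz
          split_ifs at hz with h2 h3
          · rw [h2.2, if_pos h2.1]
          · rw [if_neg (by rw [h3.val_eq]; simp), h3.val_eq, List.dropLast_concat]
          · exact absurd rfl hz
      exact Subtype.ext ((hval z₁ h₁).trans (hval z₂ h₂).symm)
  have hsummc : Summable c := summable_of_support_finite hcfin
  have hsummr : Summable r := summable_of_support_finite hrfin
  calc ∑' z, P x z = ∑' z, (c z + r z) := tsum_congr hsplit
    _ = (∑' z, c z) + ∑' z, r z := Summable.tsum_add hsummc hsummr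
    _ ≤ (1 - pm i) + pm i := add_le_add hctot hrtot
    _ = 1 := by ring

end CoverLemmas
section Reach
variable {V : Type} {E : V → V → Prop} {i₀ : V} {pG : V → V → ℝ} {pm : V → ℝ}

lemma cover_reach
    (hpG0 : ∀ i j, 0 ≤ pG i j) (hpGpos : ∀ i j, 0 < pG i j ↔ E i j)
    (hout : ∀ i : V, {j | E i j}.Finite)
    (hpm0 : ∀ i, 0 < pm i) (hpm1 : ∀ i, pm i < 1) :
    ∀ (l : List V) (h : List.Chain E i₀ l),
      (∃ k, 0 < kpow (coverP E i₀ (fun i j => (1 - pm i) * pG i j) pm) k Cover.root ⟨l, h⟩) ∧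
      (∃ m, 0 < kpow (coverP E i₀ (fun i j => (1 - pm i) * pG i j) pm) m ⟨l, h⟩ Cover.root) := by
  set p := coverP E i₀ (fun i j => (1 - pm i) * pG i j) pm with hp
  have hp0 : ∀ x y, 0 ≤ p x y :=
    coverP_nonneg (fun i => (hpm0 i).le) (fun i => (hpm1 i).le) hpG0
  have hfin : ∀ x, {z | p x z ≠ 0}.Finite := coverP_finsupp hout hpG0 hpGpos
  intro l
  induction l using List.reverseRecOn with
  | nil =>
    intro h
    have hroot : (⟨[], h⟩ : Cover V E i₀) = Cover.root := rfl
    constructor <;> exact ⟨0, by rw [hroot]; simp [kpow]⟩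
  | append_singleton t j ih =>
    intro h
    have hych : List.Chain E i₀ t := chain_prefix t h
    set x : Cover V E i₀ := ⟨t ++ [j], h⟩ with hx
    set y : Cover V E i₀ := ⟨t, hych⟩ with hy
    have hxy : x.IsChildOf y := ⟨j, rfl⟩
    have hE : E y.lbl x.lbl := hxy.edge
    have hyx_pos : 0 < p y x := by
      rw [hp, coverP_child hxy]
      exact mul_pos (by linarith [hpm1 y.lbl]) ((hpGpos _ _).2 hE)
    have hxy_pos : 0 < p x y := by
      rw [hp, coverP_parent hxy]; exact hpm0 x.lbl
    obtain ⟨⟨k, hk⟩, ⟨m, hm⟩⟩ := ih hych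
    refine ⟨⟨k + 1, ?_⟩, ⟨1 + m, ?_⟩⟩
    · have hle := kpow_mul_le hp0 hfin k 1 Cover.root y x
      rw [kpow_one] at hle
      exact lt_of_lt_of_le (mul_pos hk hyx_pos) hle
    · have hle := kpow_mul_le hp0 hfin 1 m x y Cover.root
      rw [kpow_one] at hle
      exact lt_of_lt_of_le (mul_pos hxy_pos hm) hle

lemma exists_child (hconn : ∀ i j : V, Relation.ReflTransGen E i j)
    (hpGpos : ∀ i j, 0 < pG i j ↔ E i j) (hpG0 : ∀ i j, 0 ≤ pG i j)
    (hpGsum : ∀ i, ∑' j : V, pG i j = 1) (i : V) :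
    ∃ x y : Cover V E i₀, x.IsChildOf y ∧ x.lbl = i := by
  have hj₀ : ∃ j, E i₀ j := by
    by_contra hno
    push_neg at hno
    have hz : ∀ j, pG i₀ j = 0 := fun j =>
      le_antisymm (not_lt.1 fun hp => hno j ((hpGpos _ _).1 hp)) (hpG0 _ _)
    have h1 := hpGsum i₀
    rw [tsum_congr hz, tsum_zero] at h1
    exact one_ne_zero h1.symm
  obtain ⟨j₀, hj₀⟩ := hj₀
  obtain ⟨l, hl, hlast⟩ := List.exists_isChain_cons_of_relationReflTransGen (hconn j₀ i)
  have hchain : List.Chain E i₀ (j₀ :: l) := List.chain_cons.2 ⟨hj₀, hl⟩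
  set x : Cover V E i₀ := ⟨j₀ :: l, hchain⟩ with hxdef
  have hne : (j₀ :: l) ≠ [] := List.cons_ne_nil _ _
  have hx : x.val = (j₀ :: l).dropLast ++ [(j₀ :: l).getLast hne] :=
    (List.dropLast_append_getLast hne).symm
  have hych : List.Chain E i₀ ((j₀ :: l).dropLast) := by
    apply chain_prefix _ (l₂ := [(j₀ :: l).getLast hne])
    rw [← hx]
    exact hchain
  refine ⟨x, ⟨(j₀ :: l).dropLast, hych⟩, ⟨(j₀ :: l).getLast hne, hx⟩, ?_⟩
  show x.val.getLastD i₀ = i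
  rw [hx, List.getLastD_concat]
  exact hlast

end Reach
/-- **Lemma 5 (uniform bound on `F'(-i|1)`).** Suppose the random walk on the directed
cover is transient, its nonzero one-step transition probabilities are bounded below by
some `ε₀ > 0`, and the spectral radius of the walk is strictly smaller than `1`.  Then
there is a constant `C_F` with `F'(-i|1) = Σ_n n·Fc i n ≤ C_F` for all labels `i`. -/
theorem Fprime_uniformly_bounded
    {V : Type} [Countable V] (E : V → V → Prop) (i₀ : V)
    (hconn : ∀ i j : V, Relation.ReflTransGen E i j)
    (hout : ∀ i : V, {j | E i j}.Finite) (hin : ∀ i : V, {j | E j i}.Finite)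
    (D : ℕ) (hD : ∀ i : V, {j | E i j}.ncard ≤ D ∧ {j | E j i}.ncard ≤ D)
    (pG : V → V → ℝ) (hpG0 : ∀ i j, 0 ≤ pG i j) (hpGpos : ∀ i j, 0 < pG i j ↔ E i j)
    (hpGsum : ∀ i, ∑' j : V, pG i j = 1)
    (pm : V → ℝ) (ε : ℝ) (hε0 : 0 < ε) (hε1 : ε < 1)
    (hpm : ∀ i, ε < pm i ∧ pm i < 1 - ε)
    (htrans : returnProbA (coverP E i₀ (fun i j => (1 - pm i) * pG i j) pm)
      Cover.root < 1)
    (ε₀ : ℝ) (hε₀ : 0 < ε₀)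
    (hmin : ∀ x y : Cover V E i₀,
      coverP E i₀ (fun i j => (1 - pm i) * pG i j) pm x y ≠ 0 →
      ε₀ ≤ coverP E i₀ (fun i j => (1 - pm i) * pG i j) pm x y)
    (hρ : Filter.limsup (fun n : ℕ =>
        (kpow (coverP E i₀ (fun i j => (1 - pm i) * pG i j) pm) n Cover.root Cover.root)
          ^ ((n : ℝ)⁻¹)) Filter.atTop < 1)
    (Fc : V → ℕ → ℝ)
    (hFc : ∀ x y : Cover V E i₀, Cover.IsChildOf x y → ∀ n : ℕ,
      Fc (Cover.lbl x) n =
        taboo (coverP E i₀ (fun i j => (1 - pm i) * pG i j) pm) y n x y) :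
    ∃ CF : ℝ, ∀ i : V,
      (∑' n : ℕ, (n : ℝ≥0∞) * ENNReal.ofReal (Fc i n)) ≤ ENNReal.ofReal CF := by
  classical
  set p := coverP E i₀ (fun i j => (1 - pm i) * pG i j) pm with hpdef
  have hpm0 : ∀ i, 0 ≤ pm i := fun i => le_of_lt (lt_trans hε0 (hpm i).1)
  have hpm1' : ∀ i, pm i < 1 := fun i => lt_trans (hpm i).2 (by linarith)
  have hpm1 : ∀ i, pm i ≤ 1 := fun i => (hpm1' i).le
  have hpm0' : ∀ i, 0 < pm i := fun i => lt_trans hε0 (hpm i).1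
  have hp0 : ∀ x y : Cover V E i₀, 0 ≤ p x y := coverP_nonneg hpm0 hpm1 hpG0
  have hfin : ∀ x, {z | p x z ≠ 0}.Finite := coverP_finsupp hout hpG0 hpGpos
  have hrow : ∀ x, ∑' z, p x z ≤ 1 := coverP_rowsum hout hpG0 hpGpos hpGsum hpm0 hpm1
  set ρ := Filter.limsup
    (fun n : ℕ => (kpow p n Cover.root Cover.root) ^ ((n : ℝ)⁻¹)) Filter.atTop with hρdef
  have hρ0 : 0 ≤ ρ := rho_nonneg hp0 hfin hrow Cover.root
  have hρ1 : ρ < 1 := hρ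
  set CF : ℝ := ∑' n : ℕ, (n : ℝ) * (ρ ^ (n + 1) / ε₀) with hCF
  have hsummCF : Summable (fun n : ℕ => (n : ℝ) * (ρ ^ (n + 1) / ε₀)) := by
    have h1 : Summable (fun n : ℕ => (n : ℝ) ^ 1 * ρ ^ n) :=
      summable_pow_mul_geometric_of_norm_lt_one 1
        (by rw [Real.norm_eq_abs, abs_of_nonneg hρ0]; exact hρ1)
    apply Summable.congr ((h1.mul_right ρ).div_const ε₀)
    intro n
    rw [pow_one, pow_succ]
    ring
  refine ⟨CF, ?_⟩
  intro i
  obtain ⟨x, y, hchild, hlbl⟩ := exists_child hconn hpGpos hpG0 hpGsum i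
  have hreach := cover_reach hpG0 hpGpos hout hpm0' hpm1' y.val y.property
  have hpyx : ε₀ ≤ p y x := by
    apply hmin
    rw [hpdef, coverP_child hchild]
    exact ne_of_gt (mul_pos (by linarith [hpm1' y.lbl]) ((hpGpos _ _).2 hchild.edge))
  have hbound : ∀ n : ℕ, Fc i n ≤ ρ ^ (n + 1) / ε₀ := by
    intro n
    rw [← hlbl, hFc x y hchild n]
    have h1 : taboo p y n x y ≤ kpow p n x y := taboo_le_kpow hp0 hfin y n x y
    have h2 : p y x * kpow p n x y ≤ kpow p (1 + n) y y := by
      have hle := kpow_mul_le hp0 hfin 1 n y x y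
      rwa [kpow_one] at hle
    have h3 : kpow p (1 + n) y y ≤ ρ ^ (1 + n) :=
      kpow_any_le hp0 hfin hrow Cover.root y hreach.1 hreach.2 (1 + n) (by omega)
    have h4 : ε₀ * kpow p n x y ≤ p y x * kpow p n x y :=
      mul_le_mul_of_nonneg_right hpyx (kpow_nonneg hp0 n x y)
    have h5 : kpow p n x y ≤ ρ ^ (1 + n) / ε₀ := by
      rw [le_div_iff₀ hε₀]
      calc kpow p n x y * ε₀ = ε₀ * kpow p n x y := by ring
        _ ≤ ρ ^ (1 + n) := le_trans h4 (le_trans h2 h3)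
    calc taboo p y n x y ≤ kpow p n x y := h1
      _ ≤ ρ ^ (1 + n) / ε₀ := h5
      _ = ρ ^ (n + 1) / ε₀ := by rw [add_comm]
  have hFc0 : ∀ n, 0 ≤ Fc i n := by
    intro n
    rw [← hlbl, hFc x y hchild n]
    exact taboo_nonneg hp0 y n x y
  have hterm0 : ∀ n : ℕ, (0 : ℝ) ≤ (n : ℝ) * (ρ ^ (n + 1) / ε₀) := fun n =>
    mul_nonneg (Nat.cast_nonneg n) (div_nonneg (pow_nonneg hρ0 _) hε₀.le)
  calc ∑' n : ℕ, (n : ℝ≥0∞) * ENNReal.ofReal (Fc i n)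
      ≤ ∑' n : ℕ, ENNReal.ofReal ((n : ℝ) * (ρ ^ (n + 1) / ε₀)) := by
        apply ENNReal.tsum_le_tsum
        intro n
        rw [ENNReal.ofReal_mul (Nat.cast_nonneg n), ENNReal.ofReal_natCast]
        exact mul_le_mul_right (ENNReal.ofReal_le_ofReal (hbound n)) _
    _ = ENNReal.ofReal CF := by
        rw [hCF, ENNReal.ofReal_tsum_of_nonneg hterm0 hsummCF]
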